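/- In ℂ³, the standard basis together with the three bases B_a = {3^{−1/2}(ω₃^{a x² + b x})_{x ∈ F₃} : b ∈ F₃} for a ∈ {0,1,2} form four pairwise mutually unbiased orthonormal bases; in particular N(3) = 4. -/

import Mathlib

open scoped InnerProductSpace ComplexConjugate

/-- `B` is a family of `m` pairwise mutually unbiased orthonormal bases of
`ℂ^d`. -/
def IsMUBFamily (d m : ℕ) (B : Fin m → Fin d → EuclideanSpace ℂ (Fin d)) : Prop :=
  (∀ i, Orthonormal ℂ (B i) ∧ Submodule.span ℂ (Set.range (B i)) = ⊤) ∧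
  (∀ i j, i ≠ j → ∀ a b, ‖⟪B i a, B j b⟫_ℂ‖ ^ 2 = 1 / d)

/-- `N d` is the maximal number of pairwise mutually unbiased orthonormal bases
of `ℂ^d`. -/
noncomputable def N (d : ℕ) : ℕ :=
  sSup {m : ℕ | ∃ B : Fin m → Fin d → EuclideanSpace ℂ (Fin d), IsMUBFamily d m B}

/-- The vector `3^{−1/2} (ω₃^{a x² + b x})_{x ∈ F₃}` of `ℂ³`, with
`ω₃ = exp(2πi/3)`. -/
noncomputable def v3 (a b : ZMod 3) : EuclideanSpace ℂ (ZMod 3) :=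
  WithLp.toLp 2 fun x => (1 / Real.sqrt 3 : ℂ) *
    Complex.exp (2 * Real.pi * Complex.I * (ZMod.val (a * x ^ 2 + b * x) : ℂ) / 3)

noncomputable def ω : ℂ := Complex.exp (2 * Real.pi * Complex.I / 3)

noncomputable def g (z : ZMod 3) : ℂ := ω ^ z.val

lemma v3_eq (a b x : ZMod 3) : v3 a b x = (1 / Real.sqrt 3 : ℂ) * g (a * x ^ 2 + b * x) := by
  rw [v3, g, ω, ← Complex.exp_nat_mul]
  show (1 / Real.sqrt 3 : ℂ) * Complex.exp _ = _
  congr 2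
  push_cast
  ring

lemma ω_prim : IsPrimitiveRoot ω 3 := by
  have := Complex.isPrimitiveRoot_exp 3 (by norm_num)
  convert this using 2
  norm_num [ω]

lemma ω3 : ω ^ 3 = 1 := ω_prim.pow_eq_one

lemma ω_ne_one : ω ≠ 1 := ω_prim.ne_one (by norm_num)

lemma ωsum : ω ^ 2 + ω + 1 = 0 := by
  have h : (ω - 1) * (ω ^ 2 + ω + 1) = 0 := by linear_combination ω3
  rcases mul_eq_zero.1 h with h | h
  · exact absurd (sub_eq_zero.1 h) ω_ne_one
  · exact h

lemma ωabs : ‖ω‖ = 1 := by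
  rw [ω, show (2 * Real.pi * Complex.I / 3) = ((2 * Real.pi / 3 : ℝ) : ℂ) * Complex.I by push_cast; ring]
  exact Complex.norm_exp_ofReal_mul_I _

lemma ωconj : (starRingEnd ℂ) ω = ω ^ 2 := by
  have h1 : ω * ω ^ 2 = 1 := by linear_combination ω3
  have h2 : ω * (starRingEnd ℂ) ω = 1 := by
    rw [Complex.mul_conj]
    norm_cast
    rw [Complex.normSq_eq_norm_sq, ωabs]; norm_num
  have hω0 : ω ≠ 0 := ω_prim.ne_zero (by norm_num)
  field_simp at h1 h2 ⊢
  rw [← h1] at h2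
  exact mul_left_cancel₀ hω0 (h2.trans (by ring))

lemma zcases : ∀ j : ZMod 3, j = 0 ∨ j = 1 ∨ j = 2 := by decide

lemma g_conj (j : ZMod 3) : conj (g j) = g (-j) := by
  rcases zcases j with h | h | h <;> subst h <;>
    simp only [g, show ((0:ZMod 3)).val = 0 from rfl, show ((1:ZMod 3)).val = 1 from rfl,
      show ((2:ZMod 3)).val = 2 from rfl, show (-(0:ZMod 3)) = 0 from by decide,
      show (-(1:ZMod 3)) = 2 from by decide, show (-(2:ZMod 3)) = 1 from by decide,
      map_pow, map_one, ωconj, pow_zero, pow_one]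
  · linear_combination ω * ω3

lemma ωpow (n : ℕ) : ω ^ n = ω ^ (n % 3) := by
  conv_lhs => rw [← Nat.div_add_mod n 3, pow_add, pow_mul, ω3, one_pow, one_mul]

lemma g_mul (j k : ZMod 3) : g j * g k = g (j + k) := by
  rw [g, g, g, ← pow_add, ZMod.val_add, ← ωpow]

lemma sqrt3_conj_mul : conj (1 / Real.sqrt 3 : ℂ) * (1 / Real.sqrt 3 : ℂ) = 1/3 := by
  have h : ((Real.sqrt 3 : ℝ) : ℂ) * ((Real.sqrt 3 : ℝ) : ℂ) = 3 := by
    norm_cast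
    rw [Real.mul_self_sqrt] <;> norm_num
  rw [map_div₀, map_one, Complex.conj_ofReal, div_mul_div_comm, one_mul, h]

lemma inner_v3 (a b a' b' : ZMod 3) :
    ⟪v3 a b, v3 a' b'⟫_ℂ = (1/3 : ℂ) * ∑ x : ZMod 3, g ((a' - a) * x ^ 2 + (b' - b) * x) := by
  rw [PiLp.inner_apply, Finset.mul_sum]
  refine Finset.sum_congr rfl fun x _ => ?_
  rw [RCLike.inner_apply']
  rw [v3_eq, v3_eq, map_mul, g_conj, mul_mul_mul_comm, sqrt3_conj_mul, g_mul]
  congr 2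
  ring

lemma g0 : g 0 = 1 := rfl
lemma g1 : g 1 = ω := pow_one ω
lemma g2 : g 2 = ω ^ 2 := rfl


lemma S_mul_conj (c d : ZMod 3) (hc : c ≠ 0) :
    (1 + g (c + d) + g (c + 2*d)) * (1 + g (-(c + d)) + g (-(c + 2*d))) = 3 := by
  rcases zcases c with rfl | rfl | rfl
  · exact absurd rfl hc
  all_goals rcases zcases d with rfl | rfl | rfl
  all_goals simp only [show ((1:ZMod 3) + 0) = 1 from by decide,
    show ((1:ZMod 3) + 1) = 2 from by decide,
    show ((1:ZMod 3) + 2) = 0 from by decide,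
    show ((1:ZMod 3) + 2*0) = 1 from by decide,
    show ((1:ZMod 3) + 2*1) = 0 from by decide,
    show ((1:ZMod 3) + 2*2) = 2 from by decide,
    show ((2:ZMod 3) + 0) = 2 from by decide,
    show ((2:ZMod 3) + 1) = 0 from by decide,
    show ((2:ZMod 3) + 2) = 1 from by decide,
    show ((2:ZMod 3) + 2*0) = 2 from by decide,
    show ((2:ZMod 3) + 2*1) = 1 from by decide,
    show ((2:ZMod 3) + 2*2) = 0 from by decide,
    show (-(0:ZMod 3)) = 0 from by decide,
    show (-(1:ZMod 3)) = 2 from by decide,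
    show (-(2:ZMod 3)) = 1 from by decide, g0, g1, g2]
  all_goals first
    | linear_combination (4:ℂ) * ω3 + 2 * ωsum
    | linear_combination ω3 + 2 * ωsum

lemma S_eq (c d : ZMod 3) : ∑ x : ZMod 3, g (c*x^2+d*x) = 1 + g (c+d) + g (c+2*d) := by
  rw [show (∑ x : ZMod 3, g (c*x^2+d*x))
      = g (c*(0:ZMod 3)^2+d*0) + g (c*1^2+d*1) + g (c*2^2+d*2) from Fin.sum_univ_three _,
    show c*(0:ZMod 3)^2+d*0 = 0 from by ring,
    show c*(1:ZMod 3)^2+d*1 = c+d from by ring,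
    show c*(2:ZMod 3)^2+d*2 = c+2*d from by
      have : ∀ c d : ZMod 3, c*(2:ZMod 3)^2+d*2 = c+2*d := by decide
      exact this c d, g0]

lemma sq_abs_eq (z : ℂ) (r : ℝ) (h : z * conj z = (r:ℂ)) : ‖z‖ ^ 2 = r := by
  rw [Complex.sq_norm]
  have h2 : (r:ℂ) = (Complex.normSq z : ℂ) := h ▸ Complex.mul_conj z
  exact_mod_cast h2.symm

lemma inner_v3_same (a b b' : ZMod 3) : ⟪v3 a b, v3 a b'⟫_ℂ = if b = b' then 1 else 0 := by
  rw [inner_v3, sub_self, S_eq]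
  rcases eq_or_ne b b' with rfl | hne
  · rw [if_pos rfl, sub_self]
    norm_num [g0, show (0:ZMod 3)+0 = 0 from rfl, show (0:ZMod 3)+2*0 = 0 from by decide]
  · rw [if_neg hne]
    have hd : b' - b ≠ 0 := sub_ne_zero.2 (Ne.symm hne)
    rcases zcases (b' - b) with h | h | h
    · exact absurd h hd
    · rw [h, show (0:ZMod 3)+1 = 1 from by decide, show (0:ZMod 3)+2*1 = 2 from by decide,
        g1, g2]
      linear_combination (1/3:ℂ) * ωsum
    · rw [h, show (0:ZMod 3)+2 = 2 from by decide, show (0:ZMod 3)+2*2 = 1 from by decide,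
        g1, g2]
      linear_combination (1/3:ℂ) * ωsum

lemma abs_inner_v3 (a b a' b' : ZMod 3) (h : a ≠ a') :
    ‖⟪v3 a b, v3 a' b'⟫_ℂ‖ ^ 2 = 1/3 := by
  rw [inner_v3, S_eq]
  apply sq_abs_eq
  rw [map_mul, map_add, map_add, map_one, g_conj, g_conj, mul_mul_mul_comm,
    S_mul_conj _ _ (sub_ne_zero.2 (Ne.symm h))]
  rw [show conj ((1:ℂ)/3) = 1/3 from by
    rw [map_div₀, map_one, show ((3:ℂ)) = ((3:ℝ):ℂ) from by norm_num, Complex.conj_ofReal]]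
  push_cast
  norm_num

lemma abs_v3 (a b x : ZMod 3) : ‖v3 a b x‖ ^ 2 = 1/3 := by
  rw [v3_eq, norm_mul, norm_div, norm_one, Complex.norm_real,
    Real.norm_of_nonneg (Real.sqrt_nonneg 3), g, norm_pow, ωabs, one_pow, mul_one, div_pow, one_pow,
    Real.sq_sqrt] <;> norm_num


/-- The standard basis of `ℂ³` (index `none`) together with the three bases
`B_a = {v_{a,b} : b ∈ F₃}`, `a ∈ F₃` (index `some a`). -/
noncomputable def W3 : Option (ZMod 3) → ZMod 3 → EuclideanSpace ℂ (ZMod 3)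
  | none => fun y => EuclideanSpace.single y (1 : ℂ)
  | some a => fun b => v3 a b

lemma part1 : ∀ o : Option (ZMod 3),
    ∃ B : OrthonormalBasis (ZMod 3) ℂ (EuclideanSpace ℂ (ZMod 3)),
      ∀ b : ZMod 3, B b = W3 o b := by
  rintro (_ | a)
  · exact ⟨EuclideanSpace.basisFun (ZMod 3) ℂ, fun b => EuclideanSpace.basisFun_apply _ _ b⟩
  · have hon : Orthonormal ℂ (v3 a) := orthonormal_iff_ite.2 fun b b' => by
      rw [inner_v3_same]
    have card_eq : Fintype.card (ZMod 3) = Module.finrank ℂ (EuclideanSpace ℂ (ZMod 3)) :=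
      (finrank_euclideanSpace).symm
    have hsp := hon.linearIndependent.span_eq_top_of_card_eq_finrank card_eq
    refine ⟨OrthonormalBasis.mk hon hsp.ge, fun b => ?_⟩
    rw [OrthonormalBasis.coe_mk]
    rfl

lemma part2 : ∀ o o' : Option (ZMod 3), o ≠ o' → ∀ b b' : ZMod 3,
    ‖⟪W3 o b, W3 o' b'⟫_ℂ‖ ^ 2 = 1 / 3 := by
  rintro (_ | a) (_ | a') hne b b'
  · exact absurd rfl hne
  · rw [show W3 none b = EuclideanSpace.single b 1 from rfl,
      show W3 (some a') b' = v3 a' b' from rfl, EuclideanSpace.inner_single_left,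
      map_one, one_mul, abs_v3]
  · rw [show W3 none b' = EuclideanSpace.single b' 1 from rfl,
      show W3 (some a) b = v3 a b from rfl, EuclideanSpace.inner_single_right,
      one_mul, Complex.norm_conj, abs_v3]
  · exact abs_inner_v3 a b a' b' (fun h => hne (by rw [h]))
noncomputable def Pm (u : EuclideanSpace ℂ (Fin 3)) : EuclideanSpace ℂ (Fin 3 × Fin 3) :=
  WithLp.toLp 2 fun p : Fin 3 × Fin 3 => u p.1 * conj (u p.2)

noncomputable def Idm : EuclideanSpace ℂ (Fin 3 × Fin 3) :=
  WithLp.toLp 2 fun p : Fin 3 × Fin 3 => if p.1 = p.2 then (1:ℂ) else 0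

lemma inner_Pm (u v : EuclideanSpace ℂ (Fin 3)) :
    ⟪Pm u, Pm v⟫_ℂ = ⟪u, v⟫_ℂ * conj ⟪u, v⟫_ℂ := by
  calc ⟪Pm u, Pm v⟫_ℂ
      = ∑ x : Fin 3, ∑ y : Fin 3, (conj (u x) * v x) * (u y * conj (v y)) := by
        simp_rw [PiLp.inner_apply, RCLike.inner_apply, Fintype.sum_prod_type]
        refine Finset.sum_congr rfl fun x _ => Finset.sum_congr rfl fun y _ => ?_
        show (v x * conj (v y)) * conj (u x * conj (u y)) = _
        rw [map_mul, Complex.conj_conj]; ring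
    _ = (∑ x : Fin 3, conj (u x) * v x) * (∑ y : Fin 3, u y * conj (v y)) :=
        (Finset.sum_mul_sum _ _ _ _).symm
    _ = ⟪u, v⟫_ℂ * conj ⟪u, v⟫_ℂ := by
        simp_rw [PiLp.inner_apply, RCLike.inner_apply, map_sum]
        congr 1
        exacts [Finset.sum_congr rfl fun y _ => mul_comm _ _,
          Finset.sum_congr rfl fun y _ => by rw [map_mul, Complex.conj_conj, mul_comm]]

lemma inner_Idm_Pm (u : EuclideanSpace ℂ (Fin 3)) : ⟪Idm, Pm u⟫_ℂ = ⟪u, u⟫_ℂ := by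
  simp_rw [PiLp.inner_apply, RCLike.inner_apply, Fintype.sum_prod_type]
  refine Finset.sum_congr rfl fun x _ => ?_
  rw [Finset.sum_congr rfl (fun y _ =>
    show Pm u (x, y) * conj (Idm (x, y)) = if x = y then u x * conj (u y) else 0 from by
      by_cases h : x = y <;> simp [Idm, Pm, h])]
  rw [Finset.sum_ite_eq Finset.univ x (fun y => u x * conj (u y))]
  simp [mul_comm]

lemma inner_Idm_Idm : ⟪Idm, Idm⟫_ℂ = 3 := by
  simp_rw [PiLp.inner_apply, RCLike.inner_apply, Fintype.sum_prod_type]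
  rw [Finset.sum_congr rfl (fun x _ => Finset.sum_congr rfl (fun y _ =>
    show Idm (x, y) * conj (Idm (x, y)) = if x = y then 1 else 0 from by
      by_cases h : x = y <;> simp [Idm, h]))]
  rw [Finset.sum_congr rfl (fun x _ => Finset.sum_ite_eq Finset.univ x (fun _ => (1:ℂ)))]
  norm_num

lemma upper {m : ℕ} (B : Fin m → Fin 3 → EuclideanSpace ℂ (Fin 3))
    (hB : IsMUBFamily 3 m B) : m ≤ 4 := by
  obtain ⟨h1, h2⟩ := hB
  have hon : ∀ i a b, ⟪B i a, B i b⟫_ℂ = if a = b then 1 else 0 :=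
    fun i => orthonormal_iff_ite.1 (h1 i).1
  have hcross : ∀ i j, i ≠ j → ∀ a b,
      ⟪B i a, B j b⟫_ℂ * conj ⟪B i a, B j b⟫_ℂ = 1/3 := by
    intro i j hij a b
    rw [Complex.mul_conj]
    have h3 : Complex.normSq ⟪B i a, B j b⟫_ℂ = 1/3 := by
      rw [← Complex.sq_norm, h2 i j hij a b]; norm_num
    rw [h3]; norm_num
  set Q : Fin m → Fin 3 → EuclideanSpace ℂ (Fin 3 × Fin 3) :=
    fun i a => Pm (B i a) - (3:ℂ)⁻¹ • Idm with hQ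
  have gram_IQ : ∀ i a, ⟪Idm, Q i a⟫_ℂ = 0 := by
    intro i a
    rw [hQ, inner_sub_right, inner_smul_right, inner_Idm_Pm, inner_Idm_Idm, hon, if_pos rfl]
    norm_num
  have hPI : ∀ i a, ⟪Pm (B i a), Idm⟫_ℂ = 1 := by
    intro i a
    rw [← inner_conj_symm, inner_Idm_Pm, hon, if_pos rfl, map_one]
  have gram_QQ : ∀ i a j b, ⟪Q i a, Q j b⟫_ℂ
      = if i = j then (if a = b then 1 else 0) - 1/3 else 0 := by
    intro i a j b
    rw [hQ]
    simp only [inner_sub_left, inner_sub_right, inner_smul_left, inner_smul_right]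
    rw [inner_Pm, inner_Idm_Pm, inner_Idm_Idm, hPI, hon j]
    by_cases hij : i = j
    · subst hij
      rw [if_pos rfl, hon i a b]
      by_cases hab : a = b <;> simp [hab, map_ofNat] <;> norm_num
    · rw [if_neg hij, hcross i j hij a b]
      norm_num [map_ofNat]
  -- the linearly independent family
  set F : Option (Fin m × Fin 2) → EuclideanSpace ℂ (Fin 3 × Fin 3) :=
    fun j => match j with
      | none => Idm
      | some (i, a) => Q i a.castSucc with hF
  have hli : LinearIndependent ℂ F := by
    rw [Fintype.linearIndependent_iff]
    intro gc hsum
    have key : ∀ w : EuclideanSpace ℂ (Fin 3 × Fin 3),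
        ∑ j, gc j * ⟪w, F j⟫_ℂ = 0 := by
      intro w
      have h : ⟪w, ∑ j, gc j • F j⟫_ℂ = 0 := by rw [hsum, inner_zero_right]
      rw [inner_sum] at h
      simp_rw [inner_smul_right] at h
      exact h
    have hnone : gc none = 0 := by
      have h0 := key Idm
      rw [Fintype.sum_option] at h0
      rw [Finset.sum_eq_zero (fun p _ => by
        rcases p with ⟨i, a⟩
        rw [show F (some (i, a)) = Q i a.castSucc from rfl, gram_IQ, mul_zero])] at h0
      rw [add_zero, show F none = Idm from rfl, inner_Idm_Idm] at h0
      have h3 : gc none * 3 = 0 := h0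
      rcases mul_eq_zero.1 h3 with h | h
      · exact h
      · exact absurd h (by norm_num)
    have hsome : ∀ i a, gc (some (i, a)) = 0 := by
      intro i a
      have E : ∀ a : Fin 2, ∑ b : Fin 2,
          gc (some (i, b)) * ((if a = b then (1:ℂ) else 0) - 1/3) = 0 := by
        intro a
        have h0 := key (Q i a.castSucc)
        rw [Fintype.sum_option] at h0
        have hQI : ⟪Q i a.castSucc, Idm⟫_ℂ = 0 := by
          rw [← inner_conj_symm, gram_IQ, map_zero]
        rw [show F none = Idm from rfl, hQI, mul_zero, zero_add, Fintype.sum_prod_type] at h0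
        have h1' : ∀ i' : Fin m, (∑ b : Fin 2, gc (some (i', b)) * ⟪Q i a.castSucc, F (some (i', b))⟫_ℂ)
            = if i = i' then ∑ b : Fin 2,
                gc (some (i, b)) * ((if a = b then (1:ℂ) else 0) - 1/3) else 0 := by
          intro i'
          by_cases h : i = i'
          · subst h
            rw [if_pos rfl]
            refine Finset.sum_congr rfl fun b _ => ?_
            rw [show F (some (i, b)) = Q i b.castSucc from rfl, gram_QQ, if_pos rfl,
              show (if a.castSucc = b.castSucc then (1:ℂ) else 0) = if a = b then 1 else 0 from by
                simp [Fin.castSucc_inj]]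
          · rw [if_neg h]
            refine Finset.sum_eq_zero fun b _ => ?_
            rw [show F (some (i', b)) = Q i' b.castSucc from rfl, gram_QQ, if_neg h, mul_zero]
        rw [Finset.sum_congr rfl (fun i' _ => h1' i'),
          Finset.sum_ite_eq Finset.univ i _] at h0
        simpa using h0
      have E0 := E 0
      have E1 := E 1
      rw [Fin.sum_univ_two] at E0 E1
      norm_num at E0 E1
      have ha : ∀ x : Fin 2, x = 0 ∨ x = 1 := by decide
      rcases ha a with rfl | rfl
      · linear_combination 2 * E0 + E1
      · linear_combination E0 + 2 * E1
    rintro (_ | ⟨i, a⟩)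
    · exact hnone
    · exact hsome i a
  have hcard := hli.fintype_card_le_finrank
  rw [finrank_euclideanSpace] at hcard
  simp [Fintype.card_option, Fintype.card_prod] at hcard
  omega

noncomputable def Tiso : EuclideanSpace ℂ (ZMod 3) ≃ₗᵢ[ℂ] EuclideanSpace ℂ (Fin 3) :=
  LinearIsometryEquiv.piLpCongrLeft 2 ℂ ℂ (Equiv.refl _ : ZMod 3 ≃ Fin 3)

def eo : Fin 4 → Option (ZMod 3) := ![none, some 0, some 1, some 2]

noncomputable def Bfun : Fin 4 → Fin 3 → EuclideanSpace ℂ (Fin 3) :=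
  fun i b => Tiso (W3 (eo i) ((Equiv.refl _ : ZMod 3 ≃ Fin 3).symm b))

lemma honW : ∀ o, Orthonormal ℂ (W3 o) := by
  intro o
  obtain ⟨Bo, hBo⟩ := part1 o
  have h : W3 o = ⇑Bo := funext fun b => (hBo b).symm
  rw [h]
  exact Bo.orthonormal

lemma lower : IsMUBFamily 3 4 Bfun := by
  constructor
  · intro i
    have hon : Orthonormal ℂ (Bfun i) := by
      rw [orthonormal_iff_ite]
      intro a b
      simp only [Bfun]
      rw [Tiso.inner_map_map, orthonormal_iff_ite.1 (honW (eo i))]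
      simp
      rfl
    refine ⟨hon, ?_⟩
    exact hon.linearIndependent.span_eq_top_of_card_eq_finrank
      (by simp [finrank_euclideanSpace])
  · intro i j hij a b
    have hne : eo i ≠ eo j := fun h => hij ((by decide : Function.Injective eo) h)
    simp only [Bfun]
    rw [Tiso.inner_map_map, part2 _ _ hne]
    norm_num

lemma Neq : N 3 = 4 := by
  have mem4 : 4 ∈ {m : ℕ | ∃ B : Fin m → Fin 3 → EuclideanSpace ℂ (Fin 3), IsMUBFamily 3 m B} :=
    ⟨Bfun, lower⟩
  have ub : ∀ k ∈ {m : ℕ | ∃ B : Fin m → Fin 3 → EuclideanSpace ℂ (Fin 3), IsMUBFamily 3 m B},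
      k ≤ 4 := by
    rintro k ⟨B, hB⟩
    exact upper B hB
  rw [N]
  exact le_antisymm (csSup_le ⟨4, mem4⟩ ub) (le_csSup ⟨4, ub⟩ mem4)

/-- In `ℂ³`, the standard basis together with the three bases `B_a`, `a ∈ F₃`,
form four pairwise mutually unbiased orthonormal bases; in particular
`N(3) = 4`. -/
theorem four_mubs_dim_three :
    (∀ o : Option (ZMod 3),
      ∃ B : OrthonormalBasis (ZMod 3) ℂ (EuclideanSpace ℂ (ZMod 3)),
        ∀ b : ZMod 3, B b = W3 o b) ∧
    (∀ o o' : Option (ZMod 3), o ≠ o' → ∀ b b' : ZMod 3,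
      ‖⟪W3 o b, W3 o' b'⟫_ℂ‖ ^ 2 = 1 / 3) ∧
    N 3 = 4 := by
  exact ⟨part1, part2, Neq⟩
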